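/- arXiv:1706.02089 — 2 statements merged into one kernel-verified Lean document; each statement's English description precedes it below -/
import Mathlib

section
/- Let G be a group and V a finite-dimensional complex G-module admitting a non-degenerate G-invariant skew-symmetric bilinear form ω and a non-degenerate G-invariant symmetric bilinear form σ. Then V decomposes as a direct sum of G-submodules V = V₊ ⊕ V₋ such that ω vanishes identically on V₊ and on V₋ (so V₊ and V₋ are isotropic for ω), and ω induces a perfect pairing between V₊ and V₋; in particular V ≅ V₊ ⊕ (V₊)^* as G-modules. -/
/-- If a finite-dimensional complex `G`-module `V` admits a nondegenerate
`G`-invariant alternating bilinear form `ω` and a nondegenerate `G`-invariant symmetric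
bilinear form `σ`, then `V = V₊ ⊕ V₋` with both summands `G`-invariant and `ω`-isotropic,
and `ω` induces a perfect pairing between `V₊` and `V₋` (so `V ≅ V₊ ⊕ V₊*`). -/
theorem isotropic_decomposition_of_invariant_forms
    (G : Type*) [Group G] (V : Type*) [AddCommGroup V] [Module ℂ V]
    [FiniteDimensional ℂ V] (ρ : Representation ℂ G V)
    (ω σ : LinearMap.BilinForm ℂ V)
    (hωalt : ω.IsAlt) (hωnd : ω.Nondegenerate)
    (hσsymm : σ.IsSymm) (hσnd : σ.Nondegenerate)
    (hωinv : ∀ (g : G) (v v' : V), ω (ρ g v) (ρ g v') = ω v v')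
    (hσinv : ∀ (g : G) (v v' : V), σ (ρ g v) (ρ g v') = σ v v') :
    ∃ Vp Vm : Submodule ℂ V,
      (∀ (g : G) (v : V), v ∈ Vp → ρ g v ∈ Vp) ∧
      (∀ (g : G) (v : V), v ∈ Vm → ρ g v ∈ Vm) ∧
      IsCompl Vp Vm ∧
      (∀ v ∈ Vp, ∀ v' ∈ Vp, ω v v' = 0) ∧
      (∀ v ∈ Vm, ∀ v' ∈ Vm, ω v v' = 0) ∧
      (∀ v ∈ Vp, (∀ v' ∈ Vm, ω v v' = 0) → v = 0) ∧
      (∀ v' ∈ Vm, (∀ v ∈ Vp, ω v v' = 0) → v' = 0) := by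
  classical
  -- the endomorphism τ with σ (τ v) v' = ω v v'
  set τ : Module.End ℂ V := (σ.toDual hσnd).symm.toLinearMap ∘ₗ ω with hτdef
  have hστ : ∀ v v' : V, σ (τ v) v' = ω v v' := by
    intro v v'
    have : τ v = (σ.toDual hσnd).symm (ω v) := rfl
    rw [this]
    exact LinearMap.BilinForm.apply_toDual_symm_apply (hB := hσnd) (ω v) v'
  have hσsymm' : ∀ x y : V, σ x y = σ y x := by
    intro x y; simpa using (hσsymm.eq x y)
  -- skew-symmetry of τ with respect to σ
  have hskew : ∀ v v' : V, σ (τ v) v' = - σ v (τ v') := by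
    intro v v'
    rw [hστ, ← LinearMap.IsAlt.neg hωalt v' v, hσsymm' v (τ v'), hστ]
  -- key orthogonality between generalized eigenspaces
  have hkey : ∀ (n : ℕ), ∀ (k l : ℕ) (a b : ℂ) (v v' : V), k + l ≤ n →
      ((τ - a • 1) ^ k) v = 0 → ((τ - b • 1) ^ l) v' = 0 → a + b ≠ 0 → σ v v' = 0 := by
    intro n
    induction n with
    | zero =>
      intro k l a b v v' hkl hv hv' _
      have hk : k = 0 := by omega
      subst hk
      simp only [pow_zero, Module.End.one_apply] at hv
      subst hv; simp
    | succ n ih =>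
      intro k l a b v v' hkl hv hv' hab
      rcases Nat.eq_zero_or_pos k with hk | hk
      · subst hk
        simp only [pow_zero, Module.End.one_apply] at hv
        subst hv; simp
      rcases Nat.eq_zero_or_pos l with hl | hl
      · subst hl
        simp only [pow_zero, Module.End.one_apply] at hv'
        subst hv'; simp
      obtain ⟨k', rfl⟩ : ∃ k', k = k' + 1 := ⟨k - 1, by omega⟩
      obtain ⟨l', rfl⟩ : ∃ l', l = l' + 1 := ⟨l - 1, by omega⟩
      set w : V := (τ - a • 1) v with hw
      set w' : V := (τ - b • 1) v' with hw'
      have hwv : ((τ - a • 1) ^ k') w = 0 := by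
        rw [hw, ← Module.End.mul_apply, ← pow_succ]
        exact hv
      have hwv' : ((τ - b • 1) ^ l') w' = 0 := by
        rw [hw', ← Module.End.mul_apply, ← pow_succ]
        exact hv'
      have h1 : σ w v' = 0 := ih k' (l' + 1) a b w v' (by omega) hwv hv' hab
      have h2 : σ v w' = 0 := ih (k' + 1) l' a b v w' (by omega) hv hwv' hab
      have e1 : σ (τ v) v' - a * σ v v' = 0 := by
        have : σ ((τ - a • 1) v) v' = 0 := h1
        simpa [LinearMap.sub_apply, LinearMap.smul_apply, Module.End.one_apply, map_sub,
          smul_eq_mul] using this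
      have e2 : σ v (τ v') - b * σ v v' = 0 := by
        have : σ v ((τ - b • 1) v') = 0 := h2
        simpa [LinearMap.sub_apply, LinearMap.smul_apply, Module.End.one_apply, map_sub,
          smul_eq_mul] using this
      have e3 : σ v (τ v') = - σ (τ v) v' := by
        have := hskew v v'
        linear_combination this
      have : (a + b) * σ v v' = 0 := by
        linear_combination -e1 - e2 + e3
      rcases mul_eq_zero.mp this with h | h
      · exact absurd h hab
      · exact h
  have hortho : ∀ (a b : ℂ), a + b ≠ 0 → ∀ v ∈ τ.maxGenEigenspace a,
      ∀ v' ∈ τ.maxGenEigenspace b, σ v v' = 0 := by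
    intro a b hab v hv v' hv'
    obtain ⟨k, hk⟩ := (Module.End.mem_maxGenEigenspace τ a v).mp hv
    obtain ⟨l, hl⟩ := (Module.End.mem_maxGenEigenspace τ b v').mp hv'
    exact hkey (k + l) k l a b v v' le_rfl hk hl hab
  -- τ preserves its generalized eigenspaces
  have hτmaps : ∀ (a : ℂ), ∀ v ∈ τ.maxGenEigenspace a, τ v ∈ τ.maxGenEigenspace a :=
    fun a v hv => Module.End.mapsTo_maxGenEigenspace_of_comm (Commute.refl τ) a hv
  -- ω version of orthogonality
  have hωortho : ∀ (a b : ℂ), a + b ≠ 0 → ∀ v ∈ τ.maxGenEigenspace a,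
      ∀ v' ∈ τ.maxGenEigenspace b, ω v v' = 0 := by
    intro a b hab v hv v' hv'
    rw [← hστ]
    exact hortho a b hab (τ v) (hτmaps a v hv) v' hv'
  -- τ is injective, so the generalized 0-eigenspace is trivial
  have hτinj : ∀ v : V, τ v = 0 → v = 0 := by
    intro v hv
    apply hωnd.1 v
    intro v'
    rw [← hστ, hv, map_zero, LinearMap.zero_apply]
  have hzero : τ.maxGenEigenspace 0 = ⊥ := by
    rw [eq_bot_iff]
    intro v hv
    obtain ⟨k, hk⟩ := (Module.End.mem_maxGenEigenspace τ 0 v).mp hv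
    simp only [zero_smul, sub_zero] at hk
    have : ∀ (k : ℕ) (v : V), (τ ^ k) v = 0 → v = 0 := by
      intro k
      induction k with
      | zero => intro v h; simpa using h
      | succ k ihk =>
        intro v h
        rw [pow_succ, Module.End.mul_apply] at h
        exact hτinj v (ihk (τ v) h)
    exact this k v hk
  -- the sign predicate
  set P : ℂ → Prop := fun z => 0 < z.im ∨ (z.im = 0 ∧ 0 < z.re) with hP
  have hPneg : ∀ z, P z → P (-z) → False := by
    intro z h1 h2
    simp only [hP, Complex.neg_im, Complex.neg_re] at h1 h2
    rcases h1 with h | ⟨h, h'⟩ <;> rcases h2 with g | ⟨g, g'⟩ <;> linarith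
  have hPtot : ∀ z : ℂ, z ≠ 0 → P z ∨ P (-z) := by
    intro z hz
    simp only [hP, Complex.neg_im, Complex.neg_re]
    rcases lt_trichotomy z.im 0 with h | h | h
    · right; left; linarith
    · rcases lt_trichotomy z.re 0 with h' | h' | h'
      · right; right; constructor <;> [linarith; linarith]
      · exact absurd (Complex.ext h' h) hz
      · left; right; exact ⟨h, h'⟩
    · left; left; exact h
  have hPP : ∀ a b : ℂ, P a → P b → a + b ≠ 0 := by
    intro a b ha hb hab
    have : b = -a := by linear_combination hab
    exact hPneg a ha (this ▸ hb)
  have hMM : ∀ a b : ℂ, P (-a) → P (-b) → a + b ≠ 0 := by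
    intro a b ha hb hab
    have : -b = a := by linear_combination -hab
    exact hPneg (-a) ha (by rw [neg_neg]; exact this ▸ hb)
  have hPM : ∀ a b : ℂ, P a → P (-b) → (∀ z, ¬ (P z ∧ P (-z))) → True := fun _ _ _ _ _ => trivial
  -- the two submodules
  set Vp : Submodule ℂ V := ⨆ (c : ℂ) (_ : P c), τ.maxGenEigenspace c with hVp
  set Vm : Submodule ℂ V := ⨆ (c : ℂ) (_ : P (-c)), τ.maxGenEigenspace c with hVm
  -- functional-vanishing extension lemmas
  have hVpker : ∀ (f : V →ₗ[ℂ] ℂ), (∀ c, P c → ∀ x ∈ τ.maxGenEigenspace c, f x = 0) →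
      ∀ x ∈ Vp, f x = 0 := by
    intro f hf x hx
    have : Vp ≤ LinearMap.ker f := by
      refine iSup₂_le fun c hc => ?_
      intro y hy
      exact LinearMap.mem_ker.mpr (hf c hc y hy)
    exact this hx
  have hVmker : ∀ (f : V →ₗ[ℂ] ℂ), (∀ c, P (-c) → ∀ x ∈ τ.maxGenEigenspace c, f x = 0) →
      ∀ x ∈ Vm, f x = 0 := by
    intro f hf x hx
    have : Vm ≤ LinearMap.ker f := by
      refine iSup₂_le fun c hc => ?_
      intro y hy
      exact LinearMap.mem_ker.mpr (hf c hc y hy)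
    exact this hx
  -- isotropy of Vp
  have hisoP : ∀ v ∈ Vp, ∀ v' ∈ Vp, ω v v' = 0 := by
    intro v hv v' hv'
    have h1 : ∀ c, P c → ∀ x ∈ τ.maxGenEigenspace c, (ω.flip v') x = 0 := by
      intro c hc x hx
      show ω x v' = 0
      exact hVpker (ω x) (fun d hd y hy => hωortho c d (hPP c d hc hd) x hx y hy) v' hv'
    exact hVpker (ω.flip v') h1 v hv
  have hisoM : ∀ v ∈ Vm, ∀ v' ∈ Vm, ω v v' = 0 := by
    intro v hv v' hv'
    have h1 : ∀ c, P (-c) → ∀ x ∈ τ.maxGenEigenspace c, (ω.flip v') x = 0 := by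
      intro c hc x hx
      show ω x v' = 0
      exact hVmker (ω x) (fun d hd y hy => hωortho c d (hMM c d hc hd) x hx y hy) v' hv'
    exact hVmker (ω.flip v') h1 v hv
  -- Vp ⊔ Vm = ⊤
  have hsup : Vp ⊔ Vm = ⊤ := by
    rw [eq_top_iff, ← Module.End.iSup_maxGenEigenspace_eq_top τ]
    refine iSup_le fun c => ?_
    rcases eq_or_ne c 0 with rfl | hc
    · rw [hzero]; exact bot_le
    rcases hPtot c hc with h | h
    · exact le_trans (le_iSup₂ (f := fun c (_ : P c) => τ.maxGenEigenspace c) c h) le_sup_left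
    · exact le_trans (le_iSup₂ (f := fun c (_ : P (-c)) => τ.maxGenEigenspace c) c h) le_sup_right
  -- if v pairs to zero with both Vp and Vm then v = 0
  have hkill : ∀ v : V, (∀ v' ∈ Vp, ω v v' = 0) → (∀ v' ∈ Vm, ω v v' = 0) → v = 0 := by
    intro v h1 h2
    apply hωnd.1 v
    intro v'
    have hv' : v' ∈ Vp ⊔ Vm := by rw [hsup]; exact Submodule.mem_top
    obtain ⟨a, ha, b, hb, rfl⟩ := Submodule.mem_sup.mp hv'
    rw [map_add, h1 a ha, h2 b hb, add_zero]
  -- disjointness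
  have hdisj : Disjoint Vp Vm := by
    rw [disjoint_iff]
    rw [eq_bot_iff]
    intro v hv
    have hv1 : v ∈ Vp := hv.1
    have hv2 : v ∈ Vm := hv.2
    have := hkill v (fun v' hv' => hisoP v hv1 v' hv') (fun v' hv' => hisoM v hv2 v' hv')
    simp [this]
  -- equivariance of τ
  have hcomm : ∀ g : G, Commute τ (ρ g) := by
    intro g
    have key : ∀ v : V, τ (ρ g v) = ρ g (τ v) := by
      intro v
      have hne : ∀ x y : V, (∀ z, σ x z = σ y z) → x = y := by
        intro x y h
        have : x - y = 0 := by
          apply hσnd.1 (x - y)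
          intro z
          rw [map_sub, LinearMap.sub_apply, h z, sub_self]
        exact sub_eq_zero.mp this
      apply hne
      intro z
      have hρinv : ρ g (ρ g⁻¹ z) = z := by
        have : ρ g * ρ g⁻¹ = 1 := by rw [← map_mul, mul_inv_cancel, map_one]
        calc ρ g (ρ g⁻¹ z) = (ρ g * ρ g⁻¹) z := rfl
        _ = z := by rw [this]; rfl
      calc σ (τ (ρ g v)) z = ω (ρ g v) z := hστ _ _
        _ = ω (ρ g v) (ρ g (ρ g⁻¹ z)) := by rw [hρinv]
        _ = ω v (ρ g⁻¹ z) := hωinv g v (ρ g⁻¹ z)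
        _ = σ (τ v) (ρ g⁻¹ z) := (hστ _ _).symm
        _ = σ (ρ g (τ v)) (ρ g (ρ g⁻¹ z)) := (hσinv g (τ v) (ρ g⁻¹ z)).symm
        _ = σ (ρ g (τ v)) z := by rw [hρinv]
    ext v
    simpa [Module.End.mul_apply] using key v
  have hρmaps : ∀ (g : G) (c : ℂ), ∀ v ∈ τ.maxGenEigenspace c, ρ g v ∈ τ.maxGenEigenspace c :=
    fun g c v hv => Module.End.mapsTo_maxGenEigenspace_of_comm (hcomm g) c hv
  have hρVp : ∀ (g : G) (v : V), v ∈ Vp → ρ g v ∈ Vp := by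
    intro g v hv
    have : Vp ≤ Submodule.comap (ρ g) Vp := by
      refine iSup₂_le fun c hc => ?_
      intro x hx
      exact le_iSup₂ (f := fun c (_ : P c) => τ.maxGenEigenspace c) c hc (hρmaps g c x hx)
    exact this hv
  have hρVm : ∀ (g : G) (v : V), v ∈ Vm → ρ g v ∈ Vm := by
    intro g v hv
    have : Vm ≤ Submodule.comap (ρ g) Vm := by
      refine iSup₂_le fun c hc => ?_
      intro x hx
      exact le_iSup₂ (f := fun c (_ : P (-c)) => τ.maxGenEigenspace c) c hc (hρmaps g c x hx)
    exact this hv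
  refine ⟨Vp, Vm, hρVp, hρVm, ⟨hdisj, codisjoint_iff.mpr hsup⟩, hisoP, hisoM, ?_, ?_⟩
  · intro v hv h
    exact hkill v (fun v' hv' => hisoP v hv v' hv') h
  · intro v' hv' h
    have h' : ∀ v, ω v' v = 0 → ω v v' = 0 := by
      intro v hvv
      rw [← LinearMap.IsAlt.neg hωalt, hvv, neg_zero]
    have : ∀ v : V, ω v' v = 0 := by
      intro v
      have hvm : v ∈ Vp ⊔ Vm := by rw [hsup]; exact Submodule.mem_top
      obtain ⟨a, ha, b, hb, rfl⟩ := Submodule.mem_sup.mp hvm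
      have hv0 : ω (a + b) v' = 0 := by
        rw [map_add, LinearMap.add_apply, h a ha, hisoM b hb v' hv', add_zero]
      rw [← LinearMap.IsAlt.neg hωalt, hv0, neg_zero]
    exact hωnd.1 v' this
end

section
/- Let μ : ℂ² × ℂ² → ℂ³, μ(z₁,z₂,w₁,w₂) = (z₁w₂, z₂w₁, z₁w₁ - z₂w₂), be the moment map for the SL₂(ℂ)-action on the defining representation R₁ and its dual. Then the ideal (μ₁, μ₂, μ₃) in ℂ[z₁,z₂,w₁,w₂] is not a radical ideal; indeed (z₁w₁)² lies in (μ) but z₁w₁ does not. -/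
set_option synthInstance.maxHeartbeats 400000
set_option maxHeartbeats 800000

open MvPolynomial

noncomputable def aa : DualNumber (DualNumber ℂ) := TrivSqZeroExt.inl DualNumber.eps
noncomputable def bb : DualNumber (DualNumber ℂ) := DualNumber.eps

lemma aa_mul_aa : aa * aa = 0 := by
  rw [aa, ← TrivSqZeroExt.inl_mul, DualNumber.eps_mul_eps, TrivSqZeroExt.inl_zero]

lemma bb_mul_bb : bb * bb = 0 := DualNumber.eps_mul_eps

lemma aa_mul_bb : aa * bb = TrivSqZeroExt.inr DualNumber.eps := by
  rw [aa, bb, DualNumber.eps, DualNumber.eps, TrivSqZeroExt.inl_mul_inr, smul_eq_mul, mul_one]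

lemma aa_mul_bb_ne_zero : aa * bb ≠ 0 := by
  rw [aa_mul_bb]
  intro h
  have h2 := congrArg TrivSqZeroExt.snd h
  rw [TrivSqZeroExt.snd_inr, TrivSqZeroExt.snd_zero, DualNumber.eps] at h2
  have h3 := congrArg TrivSqZeroExt.snd h2
  simp at h3

/-- For the moment map `μ = (z₁w₂, z₂w₁, z₁w₁ - z₂w₂)` of the
`SL₂(ℂ)`-action on `R₁ ⊕ R₁*`, the ideal `(μ₁,μ₂,μ₃) ⊆ ℂ[z₁,z₂,w₁,w₂]` is not radical:
`(z₁w₁)²` lies in the ideal but `z₁w₁` does not.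
(Variables: `X 0 = z₁`, `X 1 = z₂`, `X 2 = w₁`, `X 3 = w₂`.) -/
theorem sl2_R1_moment_ideal_not_radical :
    let μ₁ : MvPolynomial (Fin 4) ℂ := X 0 * X 3
    let μ₂ : MvPolynomial (Fin 4) ℂ := X 1 * X 2
    let μ₃ : MvPolynomial (Fin 4) ℂ := X 0 * X 2 - X 1 * X 3
    let I : Ideal (MvPolynomial (Fin 4) ℂ) := Ideal.span {μ₁, μ₂, μ₃}
    (X 0 * X 2 : MvPolynomial (Fin 4) ℂ) ^ 2 ∈ I ∧
    (X 0 * X 2 : MvPolynomial (Fin 4) ℂ) ∉ I ∧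
    ¬ I.IsRadical := by
  intro μ₁ μ₂ μ₃ I
  have hμ₁ : μ₁ ∈ I := Ideal.subset_span (by simp)
  have hμ₂ : μ₂ ∈ I := Ideal.subset_span (by simp)
  have hμ₃ : μ₃ ∈ I := Ideal.subset_span (by simp)
  have hsq : (X 0 * X 2 : MvPolynomial (Fin 4) ℂ) ^ 2 ∈ I := by
    have heq : (X 0 * X 2 : MvPolynomial (Fin 4) ℂ) ^ 2
        = (X 0 * X 2) * μ₃ + μ₁ * μ₂ := by
      simp only [μ₁, μ₂, μ₃]; ring
    rw [heq]
    exact I.add_mem (I.mul_mem_left _ hμ₃) (I.mul_mem_right _ hμ₁)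
  have hnot : (X 0 * X 2 : MvPolynomial (Fin 4) ℂ) ∉ I := by
    intro hmem
    set f := (aeval ![aa, bb, bb, aa] : MvPolynomial (Fin 4) ℂ →ₐ[ℂ] DualNumber (DualNumber ℂ))
    have hker : I ≤ RingHom.ker f.toRingHom := by
      rw [Ideal.span_le]
      rintro p hp
      simp only [Set.mem_insert_iff, Set.mem_singleton_iff] at hp
      rcases hp with rfl | rfl | rfl <;>
        simp only [μ₁, μ₂, μ₃, SetLike.mem_coe, RingHom.mem_ker, AlgHom.toRingHom_eq_coe, RingHom.coe_coe, map_mul, map_sub,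
          aeval_X, f, Matrix.cons_val_zero, Matrix.cons_val_one, Matrix.head_cons,
          Matrix.cons_val_two, Matrix.tail_cons, Matrix.cons_val_three]
      · exact aa_mul_aa
      · exact bb_mul_bb
      · rw [mul_comm aa bb]; ring
    have h0 : f (X 0 * X 2) = 0 := hker hmem
    rw [map_mul, aeval_X, aeval_X] at h0
    simp only [Matrix.cons_val_zero, Matrix.cons_val_two, Matrix.tail_cons, Matrix.head_cons] at h0
    exact aa_mul_bb_ne_zero h0
  refine ⟨hsq, hnot, fun hrad => hnot ?_⟩
  exact hrad ⟨2, hsq⟩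
end
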